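/- Let a, b be positive integers, and define U_1 = a, U_2 = b, U_{n+2} = U_{n+1} + U_n. Then for all n ≥ 1 the sum ∑_{d ∣ n} μ(n/d) U_d is nonnegative and divisible by n if and only if b = 3a. -/

import Mathlib

open Polynomial Matrix Finset ArithmeticFunction

namespace RealizableAux

def Luc : ℕ → ℕ
  | 0 => 2
  | 1 => 1
  | n+2 => Luc (n+1) + Luc n

@[simp] lemma Luc_zero : Luc 0 = 2 := rfl
@[simp] lemma Luc_one : Luc 1 = 1 := rfl
@[simp] lemma Luc_two : Luc 2 = 3 := rfl
@[simp] lemma Luc_three : Luc 3 = 4 := rfl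
lemma Luc_add_two (n : ℕ) : Luc (n+2) = Luc (n+1) + Luc n := rfl

def A : Matrix (Fin 2) (Fin 2) ℤ := !![1,1;1,0]

lemma A_sq : A * A = A + 1 := by
  ext i j
  fin_cases i <;> fin_cases j <;>
    simp [A, Matrix.mul_apply, Fin.sum_univ_two, Matrix.one_apply]

lemma A_pow_add_two (n : ℕ) : A^(n+2) = A^(n+1) + A^n := by
  have : A^(n+2) = A^n * (A * A) := by
    rw [pow_succ, pow_succ, mul_assoc]
  rw [this, A_sq, mul_add, mul_one, ← pow_succ]

lemma trace_A_pow : ∀ n : ℕ, Matrix.trace (A ^ n) = (Luc n : ℤ)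
  | 0 => by simp
  | 1 => by simp [A, Matrix.trace_fin_two]
  | n+2 => by
    rw [A_pow_add_two, trace_add, trace_A_pow (n+1), trace_A_pow n, Luc_add_two]
    push_cast; ring

lemma det_A : A.det = -1 := by simp [A]

lemma sq_eq_CH (B : Matrix (Fin 2) (Fin 2) ℤ) :
    B * B = B.trace • B - B.det • (1 : Matrix (Fin 2) (Fin 2) ℤ) := by
  ext i j
  simp only [Matrix.mul_apply, Matrix.sub_apply, Matrix.smul_apply, Matrix.trace_fin_two,
    Matrix.det_fin_two, smul_eq_mul, Fin.sum_univ_two]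
  fin_cases i <;> fin_cases j <;> simp [Matrix.one_apply] <;> ring

lemma Luc_rec (m j : ℕ) :
    (Luc (m*(j+2)) : ℤ) = (Luc m : ℤ) * Luc (m*(j+1)) - (-1)^m * Luc (m*j) := by
  have key : (A^m)^(j+2) = (Luc m : ℤ) • (A^m)^(j+1) - ((-1:ℤ)^m) • (A^m)^j := by
    have h1 : (A^m)^(j+2) = (A^m)^j * (A^m * A^m) := by
      rw [pow_succ, pow_succ, mul_assoc]
    rw [h1, sq_eq_CH (A^m), trace_A_pow m, Matrix.det_pow, det_A]
    rw [mul_sub, mul_smul_comm, mul_smul_comm, mul_one, ← pow_succ]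
  have tr := congrArg Matrix.trace key
  rw [trace_sub, trace_smul, trace_smul, ← pow_mul, ← pow_mul, ← pow_mul,
    trace_A_pow, trace_A_pow, trace_A_pow] at tr
  simpa [smul_eq_mul] using tr

lemma Luc_mul_eval (m : ℕ) : ∀ j : ℕ,
    (Polynomial.dickson 1 ((-1 : ℤ)^m) j).eval (Luc m : ℤ) = (Luc (m * j) : ℤ)
  | 0 => by norm_num [Polynomial.dickson_zero]
  | 1 => by simp
  | j+2 => by
    rw [Polynomial.dickson_add_two]
    simp only [eval_sub, eval_mul, eval_X, eval_C, Luc_mul_eval m (j+1), Luc_mul_eval m j]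
    rw [Luc_rec m j]


lemma dickson_eval_add_mul {R : Type*} [CommRing R] (a x y : R) (h : x * y = a) :
    ∀ n, (Polynomial.dickson 1 a n).eval (x + y) = x ^ n + y ^ n
  | 0 => by norm_num [Polynomial.dickson_zero]
  | 1 => by simp
  | n+2 => by
    simp only [Polynomial.dickson_add_two, eval_sub, eval_mul, eval_X, eval_C,
      dickson_eval_add_mul a x y h (n+1), dickson_eval_add_mul a x y h n]
    rw [← h]; ring

lemma dickson_p_zmod (p : ℕ) [Fact p.Prime] (a : ZMod p) :
    Polynomial.dickson 1 a p = X ^ p := by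
  let K := AlgebraicClosure (ZMod p)
  apply Polynomial.map_injective (algebraMap (ZMod p) K) (RingHom.injective _)
  rw [Polynomial.map_dickson, Polynomial.map_pow, map_X]
  apply Polynomial.funext
  intro z
  set a' : K := algebraMap (ZMod p) K a with ha'
  obtain ⟨x, hx⟩ : ∃ x : K, (X ^ 2 - C z * X + C a').IsRoot x := by
    apply IsAlgClosed.exists_root
    have : X ^ 2 - C z * X + C a' = C 1 * X ^ 2 + C (-z) * X + C a' := by
      simp; ring
    rw [this, Polynomial.degree_quadratic one_ne_zero]
    exact two_ne_zero
  have h0 : x ^ 2 - z * x + a' = 0 := by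
    simpa only [Polynomial.IsRoot, eval_add, eval_sub, eval_mul, eval_pow, eval_X, eval_C]
      using hx
  have hx2 : x * (z - x) = a' := by linear_combination -h0
  have hev := dickson_eval_add_mul a' x (z - x) hx2 p
  rw [show x + (z - x) = z by ring] at hev
  rw [eval_pow, eval_X, hev, ← add_pow_char, show x + (z - x) = z by ring]

lemma dickson_int_decomp (p : ℕ) (hp : p.Prime) (d : ℤ) :
    ∃ G : Polynomial ℤ, Polynomial.dickson 1 d p = X ^ p + Polynomial.C (p:ℤ) * G := by
  haveI : Fact p.Prime := ⟨hp⟩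
  have h : Polynomial.map (Int.castRingHom (ZMod p)) (Polynomial.dickson 1 d p - X ^ p) = 0 := by
    rw [Polynomial.map_sub, Polynomial.map_dickson, Polynomial.map_pow, map_X,
      dickson_p_zmod, sub_self]
  have hdvd : Polynomial.C (p:ℤ) ∣ Polynomial.dickson 1 d p - X ^ p := by
    rw [Polynomial.C_dvd_iff_dvd_coeff]
    intro i
    have h2 := congrArg (fun q => Polynomial.coeff q i) h
    simp only [Polynomial.coeff_map, Polynomial.coeff_zero] at h2
    exact_mod_cast (ZMod.intCast_zmod_eq_zero_iff_dvd _ p).mp h2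
  obtain ⟨G, hG⟩ := hdvd
  exact ⟨G, by rw [← hG]; ring⟩

lemma pow_succ_dvd_pow_sub_pow (p : ℕ) (hp : p.Prime) (j : ℕ) (hj : 1 ≤ j) (A B : ℤ)
    (h : (p:ℤ)^j ∣ A - B) : (p:ℤ)^(j+1) ∣ A^p - B^p := by
  haveI : Fact p.Prime := ⟨hp⟩
  have hfac : (∑ i ∈ Finset.range p, A ^ i * B ^ (p - 1 - i)) * (A - B) = A ^ p - B ^ p :=
    geom_sum₂_mul A B p
  have hAB : (A : ZMod p) = (B : ZMod p) := by
    have hd : (p:ℤ) ∣ A - B := dvd_trans (dvd_pow_self (p:ℤ) (by omega)) h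
    have := (ZMod.intCast_zmod_eq_zero_iff_dvd (A - B) p).mpr hd
    push_cast at this
    linear_combination this
  have hdvd : (p:ℤ) ∣ ∑ i ∈ Finset.range p, A ^ i * B ^ (p - 1 - i) := by
    rw [← ZMod.intCast_zmod_eq_zero_iff_dvd]
    push_cast
    have : ∀ i ∈ Finset.range p, (A:ZMod p)^i * (B:ZMod p)^(p-1-i) = (B:ZMod p)^(p-1) := by
      intro i hi
      rw [hAB, ← pow_add]
      congr 1
      have := Finset.mem_range.mp hi
      omega
    rw [Finset.sum_congr rfl this, Finset.sum_const, Finset.card_range, nsmul_eq_mul]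
    simp [ZMod.natCast_self]
  rw [← hfac, pow_succ']
  exact mul_dvd_mul hdvd h

lemma fermat_int (p : ℕ) (hp : p.Prime) (A : ℤ) : (p:ℤ) ∣ A^p - A := by
  haveI : Fact p.Prime := ⟨hp⟩
  rw [← ZMod.intCast_zmod_eq_zero_iff_dvd]
  push_cast
  rw [ZMod.pow_card]
  ring


lemma GaussLuc (p : ℕ) (hp : p.Prime) : ∀ k m : ℕ,
    (p:ℤ)^(k+1) ∣ (Luc (p^(k+1) * m) : ℤ) - (Luc (p^k * m) : ℤ)
  | 0, m => by
    obtain ⟨G, hG⟩ := dickson_int_decomp p hp ((-1)^m)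
    have he := Luc_mul_eval m p
    rw [hG] at he
    simp only [eval_add, eval_mul, eval_pow, eval_X, eval_C] at he
    have h1 : (Luc (p^1 * m) : ℤ) - (Luc (p^0 * m) : ℤ)
        = ((Luc m : ℤ)^p - (Luc m : ℤ)) + (p:ℤ) * G.eval (Luc m : ℤ) := by
      rw [show p^1*m = m*p by ring, show p^0*m = m by ring, ← he]; ring
    rw [pow_one, h1]
    exact dvd_add (fermat_int p hp _) (dvd_mul_right _ _)
  | k+1, m => by
    by_cases hcase : ((-1:ℤ))^(p^(k+1)*m) = (-1:ℤ)^(p^k*m)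
    · obtain ⟨G, hG⟩ := dickson_int_decomp p hp ((-1)^(p^k*m))
      set a : ℤ := (Luc (p^(k+1)*m) : ℤ) with ha
      set b : ℤ := (Luc (p^k*m) : ℤ) with hb
      have e1 : (Luc (p^(k+2)*m) : ℤ) = a^p + (p:ℤ) * G.eval a := by
        have he := Luc_mul_eval (p^(k+1)*m) p
        rw [hcase, hG] at he
        simp only [eval_add, eval_mul, eval_pow, eval_X, eval_C] at he
        rw [show p^(k+2)*m = p^(k+1)*m*p by ring, ← he]
      have e2 : a = b^p + (p:ℤ) * G.eval b := by
        have he := Luc_mul_eval (p^k*m) p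
        rw [hG] at he
        simp only [eval_add, eval_mul, eval_pow, eval_X, eval_C] at he
        rw [ha, show p^(k+1)*m = p^k*m*p by ring, ← he]
      have ih : (p:ℤ)^(k+1) ∣ a - b := GaussLuc p hp k m
      have d1 : (p:ℤ)^(k+2) ∣ a^p - b^p :=
        pow_succ_dvd_pow_sub_pow p hp (k+1) (by omega) a b ih
      have d2 : (p:ℤ)^(k+2) ∣ (p:ℤ) * (G.eval a - G.eval b) := by
        have h3 : (p:ℤ)^(k+1) ∣ G.eval a - G.eval b :=
          dvd_trans ih (Polynomial.sub_dvd_eval_sub a b G)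
        rw [pow_succ']
        exact mul_dvd_mul_left _ h3
      have hsum : (Luc (p^(k+2)*m) : ℤ) - a = (a^p - b^p) + (p:ℤ) * (G.eval a - G.eval b) := by
        linear_combination e1 - e2
      rw [show k+1+1 = k+2 by ring, hsum]
      exact dvd_add d1 d2
    · have hp2 : p = 2 := by
        by_contra hne
        have hodd : Odd p := hp.odd_of_ne_two hne
        apply hcase
        have key : ∀ j : ℕ, (-1:ℤ)^(p^j*m) = (-1)^m := by
          intro j
          rw [show p^j*m = m*(p^j) by ring, pow_mul]
          rcases Nat.even_or_odd m with hm | hm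
          · rw [Even.neg_one_pow hm, one_pow]
          · rw [Odd.neg_one_pow hm, Odd.neg_one_pow (hodd.pow)]
        rw [key (k+1), key k]
      subst hp2
      have hk0 : k = 0 := by
        by_contra hkne
        apply hcase
        have h1 : Even (2^(k+1)*m) := (Nat.even_pow.mpr ⟨even_two, by omega⟩).mul_right m
        have h2 : Even (2^k*m) := (Nat.even_pow.mpr ⟨even_two, by omega⟩).mul_right m
        rw [Even.neg_one_pow h1, Even.neg_one_pow h2]
      subst hk0
      have hm : Odd m := by
        rcases Nat.even_or_odd m with hm | hm
        · exfalso; apply hcase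
          rw [Even.neg_one_pow (hm.mul_left _), Even.neg_one_pow (hm.mul_left _)]
        · exact hm
      set x : ℤ := (Luc m : ℤ) with hx
      have hd2 : ∀ (c : ℤ) (t : ℤ), (Polynomial.dickson 1 c 2).eval t = t^2 - 2*c := by
        intro c t
        rw [Polynomial.dickson_two]
        simp only [eval_sub, eval_mul, eval_pow, eval_X, eval_C, eval_ofNat]
        norm_num
        ring
      have e1 : (Luc (2*m) : ℤ) = x^2 + 2 := by
        have he := Luc_mul_eval m 2
        rw [hd2] at he
        rw [show 2*m = m*2 by ring, ← he, Odd.neg_one_pow hm]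
        ring
      have e2 : (Luc (4*m) : ℤ) = (x^2+2)^2 - 2 := by
        have he := Luc_mul_eval (2*m) 2
        rw [hd2] at he
        rw [show 4*m = 2*m*2 by ring, ← he, Even.neg_one_pow (even_two.mul_right m), e1]
        ring
      have hgoal : (Luc (2^(0+2)*m) : ℤ) - (Luc (2^(0+1)*m) : ℤ) = x^2*(x^2+3) := by
        rw [show (2:ℕ)^(0+2)*m = 4*m by ring, show (2:ℕ)^(0+1)*m = 2*m by ring, e1, e2]
        ring
      rw [hgoal, show ((2:ℕ):ℤ)^(0+2) = 4 by norm_num]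
      rcases Int.even_or_odd x with ⟨q, hq⟩ | ⟨q, hq⟩
      · exact ⟨q^2*(x^2+3), by rw [hq]; ring⟩
      · exact ⟨x^2*(q^2+q+1), by rw [hq]; ring⟩


lemma sum_moebius_transform (n : ℕ) (hn : n ≠ 0) (f : ℕ → ℤ) :
    ∑ d ∈ n.divisors, (moebius (n/d) : ℤ) * f d
      = ∑ e ∈ n.divisors, (moebius e : ℤ) * f (n/e) := by
  rw [← Nat.sum_div_divisors n (fun e => (moebius e : ℤ) * f (n/e))]
  apply Finset.sum_congr rfl
  intro d hd
  rw [Nat.div_div_self (Nat.mem_divisors.mp hd).1 hn]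

lemma pp_dvd_sum (g : ℕ → ℤ)
    (hg : ∀ (p : ℕ), p.Prime → ∀ k m : ℕ, (p:ℤ)^(k+1) ∣ g (p^(k+1) * m) - g (p^k * m))
    (p k m n : ℕ) (hp : p.Prime) (hpm : ¬ p ∣ m) (hm : m ≠ 0) (hn : n = p^(k+1)*m) :
    (p:ℤ)^(k+1) ∣ ∑ e ∈ n.divisors, (moebius e : ℤ) * g (n/e) := by
  have hn0 : n ≠ 0 := by
    rw [hn]
    exact Nat.mul_ne_zero (pow_ne_zero _ hp.pos.ne') hm
  have hppos : 0 < p := hp.pos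
  rw [← Finset.sum_filter_add_sum_filter_not n.divisors (fun e => p ∣ e)
      (fun e => (moebius e : ℤ) * g (n/e))]
  have hA : n.divisors.filter (fun e => ¬ p ∣ e) = m.divisors := by
    ext e
    simp only [Finset.mem_filter, Nat.mem_divisors]
    constructor
    · rintro ⟨⟨he, -⟩, hpe⟩
      refine ⟨?_, hm⟩
      have hcop : Nat.Coprime e (p^(k+1)) :=
        Nat.Coprime.pow_right _ (((hp.coprime_iff_not_dvd).mpr hpe).symm)
      rw [hn] at he
      exact hcop.dvd_of_dvd_mul_left he
    · rintro ⟨he, -⟩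
      refine ⟨⟨dvd_trans he ⟨p^(k+1), by rw [hn]; ring⟩, hn0⟩, ?_⟩
      intro hpe
      exact hpm (dvd_trans hpe he)
  have hB : ∑ e ∈ n.divisors.filter (fun e => p ∣ e), (moebius e : ℤ) * g (n/e)
      = ∑ f ∈ m.divisors, (moebius (p*f) : ℤ) * g (n/(p*f)) := by
    have hinj : ∀ x ∈ m.divisors, ∀ y ∈ m.divisors, p*x = p*y → x = y :=
      fun x _ y _ h => Nat.eq_of_mul_eq_mul_left hppos h
    have hsub : (m.divisors).image (fun f => p*f) ⊆ n.divisors.filter (fun e => p ∣ e) := by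
      intro e he
      simp only [Finset.mem_image, Nat.mem_divisors] at he
      obtain ⟨f, ⟨hf, -⟩, rfl⟩ := he
      simp only [Finset.mem_filter, Nat.mem_divisors]
      refine ⟨⟨?_, hn0⟩, dvd_mul_right p f⟩
      rw [hn, pow_succ']
      exact mul_dvd_mul (dvd_refl p) (dvd_trans hf (dvd_mul_left m (p^k))) |>.trans
        (dvd_of_eq (by ring))
    have hzero : ∀ e ∈ n.divisors.filter (fun e => p ∣ e),
        e ∉ (m.divisors).image (fun f => p*f) → (moebius e : ℤ) * g (n/e) = 0 := by
      intro e he hne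
      simp only [Finset.mem_filter, Nat.mem_divisors] at he
      obtain ⟨⟨hen, -⟩, hpe⟩ := he
      obtain ⟨f, rfl⟩ := hpe
      have hpf : p ∣ f := by
        by_contra hnd
        apply hne
        simp only [Finset.mem_image, Nat.mem_divisors]
        refine ⟨f, ⟨?_, hm⟩, rfl⟩
        have hf' : f ∣ p^k * m := by
          have h5 : p * f ∣ p * (p^k * m) := by
            rw [← mul_assoc, ← pow_succ']
            rw [hn] at hen
            exact hen
          exact (Nat.mul_dvd_mul_iff_left hppos).mp h5
        have hcop : Nat.Coprime f (p^k) :=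
          Nat.Coprime.pow_right _ (((hp.coprime_iff_not_dvd).mpr hnd).symm)
        exact hcop.dvd_of_dvd_mul_left hf'
      have hsq : ¬ Squarefree (p * f) := by
        intro hsqf
        exact hp.not_isUnit (hsqf p (by obtain ⟨t, rfl⟩ := hpf; exact ⟨t, by ring⟩))
      rw [moebius_eq_zero_of_not_squarefree hsq]
      simp
    calc ∑ e ∈ n.divisors.filter (fun e => p ∣ e), (moebius e : ℤ) * g (n/e)
        = ∑ e ∈ (m.divisors).image (fun f => p*f), (moebius e : ℤ) * g (n/e) :=
          (Finset.sum_subset hsub hzero).symm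
      _ = ∑ f ∈ m.divisors, (moebius (p*f) : ℤ) * g (n/(p*f)) := Finset.sum_image hinj
  rw [hA, hB, ← Finset.sum_add_distrib]
  apply Finset.dvd_sum
  intro f hf
  obtain ⟨hfm, -⟩ := Nat.mem_divisors.mp hf
  have hpf : ¬ p ∣ f := fun h => hpm (h.trans hfm)
  have hmu : (moebius (p * f) : ℤ) = -(moebius f : ℤ) := by
    rw [isMultiplicative_moebius.map_mul_of_coprime ((hp.coprime_iff_not_dvd).mpr hpf),
      moebius_apply_prime hp]
    push_cast
    ring
  have h1 : n / f = p^(k+1) * (m/f) := by rw [hn, Nat.mul_div_assoc _ hfm]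
  have h2 : n / (p * f) = p^k * (m/f) := by
    rw [hn, pow_succ', mul_assoc, Nat.mul_div_mul_left _ _ hppos, Nat.mul_div_assoc _ hfm]
  have : (moebius (p*f) : ℤ) * g (n/(p*f)) + (moebius f : ℤ) * g (n/f)
      = (moebius f : ℤ) * (g (p^(k+1) * (m/f)) - g (p^k * (m/f))) := by
    rw [hmu, h1, h2]; ring
  rw [this]
  exact Dvd.dvd.mul_left (hg p hp k (m/f)) _

lemma dvd_sum_moebius (g : ℕ → ℤ)
    (hg : ∀ (p : ℕ), p.Prime → ∀ k m : ℕ, (p:ℤ)^(k+1) ∣ g (p^(k+1) * m) - g (p^k * m))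
    (n : ℕ) (hn : n ≠ 0) :
    (n:ℤ) ∣ ∑ e ∈ n.divisors, (moebius e : ℤ) * g (n/e) := by
  have hprod : (n:ℤ) = ∏ p ∈ n.primeFactors, (p:ℤ)^(n.factorization p) := by
    conv_lhs => rw [← Nat.factorization_prod_pow_eq_self hn]
    rw [Nat.prod_factorization_eq_prod_primeFactors]
    push_cast
    rfl
  rw [hprod]
  apply Finset.prod_dvd_of_coprime
  · intro p hp q hq hne
    have hpp := Nat.prime_of_mem_primeFactors hp
    have hqp := Nat.prime_of_mem_primeFactors hq
    have : Nat.Coprime (p^(n.factorization p)) (q^(n.factorization q)) :=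
      Nat.Coprime.pow _ _ ((Nat.coprime_primes hpp hqp).mpr hne)
    exact Nat.isCoprime_iff_coprime.mpr this
  · intro p hpmem
    have hpp := Nat.prime_of_mem_primeFactors hpmem
    have hpn : p ∣ n := Nat.dvd_of_mem_primeFactors hpmem
    obtain ⟨k, hk⟩ : ∃ k, n.factorization p = k + 1 := by
      have : 1 ≤ n.factorization p := (hpp.dvd_iff_one_le_factorization hn).mp hpn
      exact ⟨n.factorization p - 1, by omega⟩
    rw [hk]
    exact pp_dvd_sum g hg p k (n / p^(k+1)) n hpp
      (by rw [← hk]; exact Nat.not_dvd_ordCompl hpp hn)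
      (by rw [← hk]; exact Nat.ordCompl_pos p hn |>.ne')
      (by rw [← hk]; exact (Nat.ordProj_mul_ordCompl_eq_self n p).symm)

lemma Luc_M_dvd (n : ℕ) (hn : n ≠ 0) :
    (n:ℤ) ∣ ∑ d ∈ n.divisors, (moebius (n/d) : ℤ) * (Luc d : ℤ) := by
  rw [sum_moebius_transform n hn]
  exact dvd_sum_moebius (fun e => (Luc e : ℤ))
    (fun p hp k m => GaussLuc p hp k m) n hn


lemma Luc_le_succ (n : ℕ) (hn : 1 ≤ n) : Luc n ≤ Luc (n+1) := by
  match n, hn with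
  | 1, _ => norm_num
  | (k+2), _ =>
    have h : Luc (k+3) = Luc (k+2) + Luc (k+1) := Luc_add_two (k+1)
    show Luc (k+2) ≤ Luc (k+3)
    omega

lemma Luc_mono {i j : ℕ} (hi : 1 ≤ i) (hij : i ≤ j) : Luc i ≤ Luc j := by
  induction j, hij using Nat.le_induction with
  | base => exact le_refl _
  | succ j hj ih => exact le_trans ih (Luc_le_succ j (le_trans hi hj))

lemma Luc_sum_Icc (m : ℕ) : 3 + ∑ d ∈ Finset.Icc 1 m, Luc d = Luc (m+2) := by
  induction m with
  | zero => simp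
  | succ m ih =>
    show 3 + ∑ d ∈ Finset.Icc 1 (m+1), Luc d = Luc (m+3)
    rw [Finset.sum_Icc_succ_top (by omega : 1 ≤ m+1)]
    have h : Luc (m+3) = Luc (m+2) + Luc (m+1) := Luc_add_two (m+1)
    omega

lemma moebius_bounds (x : ℕ) : -1 ≤ (moebius x : ℤ) ∧ (moebius x : ℤ) ≤ 1 := by
  by_cases h : Squarefree x
  · rw [moebius_apply_of_squarefree h]
    rcases Nat.even_or_odd (cardFactors x) with he | ho
    · rw [Even.neg_one_pow he]; norm_num
    · rw [Odd.neg_one_pow ho]; norm_num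
  · rw [moebius_eq_zero_of_not_squarefree h]; norm_num

lemma Luc_M_nonneg (n : ℕ) (hn : 1 ≤ n) :
    0 ≤ ∑ d ∈ n.divisors, (moebius (n/d) : ℤ) * (Luc d : ℤ) := by
  match n, hn with
  | 1, _ => simp [Nat.divisors_one]
  | 2, _ =>
    rw [show (2:ℕ).divisors = {1, 2} from Nat.Prime.divisors Nat.prime_two]
    norm_num [moebius_apply_one, moebius_apply_prime Nat.prime_two]
  | 3, _ =>
    rw [show (3:ℕ).divisors = {1, 3} from Nat.Prime.divisors Nat.prime_three]
    norm_num [moebius_apply_one, moebius_apply_prime Nat.prime_three]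
  | (n+4), _ =>
    set n' := n + 4 with hn'
    have hne : n' ≠ 0 := by omega
    rw [← Nat.insert_self_properDivisors hne, Finset.sum_insert Nat.self_notMem_properDivisors]
    rw [Nat.div_self (by omega : 0 < n'), moebius_apply_one]
    have hbound : ∀ d ∈ n'.properDivisors, -((Luc d : ℤ)) ≤ (moebius (n'/d) : ℤ) * (Luc d : ℤ) := by
      intro d hd
      have h1 := (moebius_bounds (n'/d)).1
      have h2 : (0:ℤ) ≤ (Luc d : ℤ) := by positivity
      nlinarith
    have hsum1 : -∑ d ∈ n'.properDivisors, (Luc d : ℤ)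
        ≤ ∑ d ∈ n'.properDivisors, (moebius (n'/d) : ℤ) * (Luc d : ℤ) := by
      rw [← Finset.sum_neg_distrib]
      exact Finset.sum_le_sum hbound
    have hsub : n'.properDivisors ⊆ Finset.Icc 1 (n'/2) := by
      intro d hd
      rw [Nat.mem_properDivisors] at hd
      obtain ⟨⟨c, hc⟩, hlt⟩ := hd
      rw [Finset.mem_Icc]
      have hd0 : 0 < d := by
        rcases Nat.eq_zero_or_pos d with h0 | h0
        · subst h0; rw [zero_mul] at hc; omega
        · exact h0
      refine ⟨hd0, ?_⟩
      have hc2 : 2 ≤ c := by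
        rcases Nat.lt_or_ge c 2 with h | h
        · interval_cases c <;> omega
        · exact h
      rw [Nat.le_div_iff_mul_le (by norm_num)]
      calc d * 2 ≤ d * c := Nat.mul_le_mul_left d hc2
        _ = n' := hc.symm
    have hsum2 : ∑ d ∈ n'.properDivisors, (Luc d : ℤ) ≤ ∑ d ∈ Finset.Icc 1 (n'/2), (Luc d : ℤ) :=
      Finset.sum_le_sum_of_subset_of_nonneg hsub (by intro i _ _; positivity)
    have hsum3 : ∑ d ∈ Finset.Icc 1 (n'/2), (Luc d : ℤ) = (Luc (n'/2+2) : ℤ) - 3 := by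
      have h := Luc_sum_Icc (n'/2)
      have hcast : (3:ℤ) + ∑ d ∈ Finset.Icc 1 (n'/2), (Luc d : ℤ) = (Luc (n'/2+2) : ℤ) := by
        exact_mod_cast congrArg (fun x : ℕ => (x : ℤ)) h
      linarith
    have hmono : (Luc (n'/2+2) : ℤ) ≤ (Luc n' : ℤ) := by
      have hle : n'/2 + 2 ≤ n' := by omega
      exact_mod_cast Luc_mono (by omega) hle
    linarith


lemma fib_mod_two : ∀ j : ℕ, Nat.fib j % 2 = if j % 3 = 0 then 0 else 1
  | 0 => rfl
  | 1 => rfl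
  | (j+2) => by
    have h1 := fib_mod_two j
    have h2 := fib_mod_two (j+1)
    rw [Nat.fib_add_two, Nat.add_mod, h1, h2]
    split_ifs <;> omega

lemma two_pow_mod_three : ∀ k : ℕ, 2^k % 3 = if k % 2 = 0 then 1 else 2
  | 0 => rfl
  | (k+1) => by
    have h := two_pow_mod_three k
    rw [pow_succ, Nat.mul_mod, h]
    split_ifs <;> omega

lemma sum_moebius_prime_pow_fun (p : ℕ) (hp : p.Prime) (k : ℕ) (f : ℕ → ℤ) :
    ∑ d ∈ (p^(k+1)).divisors, (moebius ((p^(k+1))/d) : ℤ) * f d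
      = f (p^(k+1)) - f (p^k) := by
  rw [sum_moebius_transform _ (pow_ne_zero _ hp.pos.ne') f]
  rw [Nat.sum_divisors_prime_pow hp]
  rw [Finset.sum_range_succ', Finset.sum_range_succ']
  have hz : ∀ i ∈ Finset.range k,
      (moebius (p^(i+1+1)) : ℤ) * f (p^(k+1)/p^(i+1+1)) = 0 := by
    intro i _
    rw [moebius_apply_prime_pow hp (by omega)]
    simp
  rw [Finset.sum_eq_zero hz]
  have e1 : p^(k+1)/p^(0+1) = p^k := by
    rw [Nat.pow_div (by omega) hp.pos]
    norm_num
  have e0 : p^(k+1)/p^0 = p^(k+1) := by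
    rw [pow_zero, Nat.div_one]
  rw [e1, e0, pow_zero, pow_one, moebius_apply_one, moebius_apply_prime hp]
  push_cast
  ring

lemma U_closed (a b : ℕ) (U : ℕ → ℕ) (hU1 : U 1 = a) (hU2 : U 2 = b)
    (hrec : ∀ n, 1 ≤ n → U (n + 2) = U (n + 1) + U n) :
    ∀ n : ℕ, (U (n+1) : ℤ) = (a:ℤ) * Luc (n+1) + ((b:ℤ) - 3*(a:ℤ)) * Nat.fib n
  | 0 => by simp [hU1]
  | 1 => by simp [hU2]; ring
  | (n+2) => by
    have h1 := U_closed a b U hU1 hU2 hrec (n+1)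
    have h2 := U_closed a b U hU1 hU2 hrec n
    have hr := hrec (n+1) (by omega)
    have hL : Luc (n+3) = Luc (n+2) + Luc (n+1) := Luc_add_two (n+1)
    have hF : Nat.fib (n+2) = Nat.fib n + Nat.fib (n+1) := Nat.fib_add_two
    show (U (n+3) : ℤ) = (a:ℤ) * Luc (n+3) + ((b:ℤ) - 3*(a:ℤ)) * Nat.fib (n+2)
    rw [show n+3 = (n+1)+2 from rfl, hr]
    push_cast [hL, hF]
    push_cast at h1 h2
    linarith [h1, h2]

end RealizableAux

open RealizableAux ArithmeticFunction

theorem realizable_iff (a b : ℕ) (ha : 0 < a) (hb : 0 < b)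
    (U : ℕ → ℕ) (hU1 : U 1 = a) (hU2 : U 2 = b)
    (hrec : ∀ n, 1 ≤ n → U (n + 2) = U (n + 1) + U n) :
    (∀ n, 1 ≤ n →
      0 ≤ ∑ d ∈ n.divisors, (ArithmeticFunction.moebius (n / d) : ℤ) * (U d : ℤ) ∧
      (n : ℤ) ∣ ∑ d ∈ n.divisors, (ArithmeticFunction.moebius (n / d) : ℤ) * (U d : ℤ)) ↔
    b = 3 * a := by
  have hU : ∀ d : ℕ, 1 ≤ d →
      (U d : ℤ) = (a:ℤ) * Luc d + ((b:ℤ) - 3*(a:ℤ)) * Nat.fib (d-1) := by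
    intro d hd
    obtain ⟨e, rfl⟩ : ∃ e, d = e + 1 := ⟨d-1, by omega⟩
    simpa using U_closed a b U hU1 hU2 hrec e
  constructor
  · intro H
    have key : ∀ k : ℕ, (2:ℤ)^(k+1) ∣ ((b:ℤ) - 3*(a:ℤ)) := by
      intro k'
      have Hn := (H (2^(k'+1)) Nat.one_le_two_pow).2
      rw [sum_moebius_prime_pow_fun 2 Nat.prime_two k' (fun d => (U d : ℤ))] at Hn
      have e1 := hU (2^(k'+1)) Nat.one_le_two_pow
      have e2 := hU (2^(k')) Nat.one_le_two_pow
      have hLd : (2:ℤ)^(k'+1) ∣ (Luc (2^(k'+1)) : ℤ) - (Luc (2^(k')) : ℤ) := by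
        have h := GaussLuc 2 Nat.prime_two k' 1
        simpa using h
      have hdiff : (U (2^(k'+1)) : ℤ) - (U (2^(k')) : ℤ)
          = (a:ℤ) * ((Luc (2^(k'+1)) : ℤ) - (Luc (2^(k')) : ℤ))
            + ((b:ℤ) - 3*(a:ℤ)) * ((Nat.fib (2^(k'+1)-1) : ℤ) - (Nat.fib (2^(k')-1) : ℤ)) := by
        rw [e1, e2]; ring
      have hdc : (2:ℤ)^(k'+1) ∣
          ((b:ℤ) - 3*(a:ℤ)) * ((Nat.fib (2^(k'+1)-1) : ℤ) - (Nat.fib (2^(k')-1) : ℤ)) := by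
        rw [hdiff] at Hn
        exact (dvd_add_right (Dvd.dvd.mul_left hLd (a:ℤ))).mp (by exact_mod_cast Hn)
      have hodd : ¬ (2:ℤ) ∣ ((Nat.fib (2^(k'+1)-1) : ℤ) - (Nat.fib (2^(k')-1) : ℤ)) := by
        have p1 := fib_mod_two (2^(k'+1)-1)
        have p2 := fib_mod_two (2^(k')-1)
        have q1 := two_pow_mod_three (k'+1)
        have q2 := two_pow_mod_three k'
        have hpow : 2^(k'+1) = 2 * 2^(k') := by rw [pow_succ]; ring
        have h2k : 1 ≤ 2^(k') := Nat.one_le_two_pow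
        intro hdvd
        split_ifs at p1 p2 q1 q2 <;> omega
      exact Prime.pow_dvd_of_dvd_mul_right Int.prime_two (k'+1) hodd hdc
    have hc0 : (b:ℤ) - 3*(a:ℤ) = 0 := by
      set c : ℤ := (b:ℤ) - 3*(a:ℤ) with hcdef
      by_contra hcne
      have hk := key c.natAbs
      have h1 : ((2:ℤ))^(c.natAbs+1) ≤ |c| :=
        Int.le_of_dvd (abs_pos.mpr hcne) ((dvd_abs _ _).mpr hk)
      have h2 : |c| < 2^(c.natAbs+1) := by
        rw [Int.abs_eq_natAbs]
        calc ((c.natAbs : ℤ)) < 2^(c.natAbs) := by exact_mod_cast (Nat.lt_two_pow_self (n := c.natAbs))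
          _ ≤ 2^(c.natAbs+1) := by
            apply pow_le_pow_right₀ (by norm_num) (by omega)
      linarith
    have : (b:ℤ) = 3*(a:ℤ) := by linarith
    exact_mod_cast this
  · intro hb3 n hn
    have hU' : ∀ d, 1 ≤ d → (U d : ℤ) = (a:ℤ) * Luc d := by
      intro d hd
      rw [hU d hd, hb3]
      push_cast
      ring
    have hsum : ∑ d ∈ n.divisors, (moebius (n/d) : ℤ) * (U d : ℤ)
        = (a:ℤ) * ∑ d ∈ n.divisors, (moebius (n/d) : ℤ) * (Luc d : ℤ) := by
      rw [Finset.mul_sum]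
      apply Finset.sum_congr rfl
      intro d hd
      rw [hU' d (Nat.pos_of_mem_divisors hd)]
      ring
    rw [hsum]
    exact ⟨mul_nonneg (by positivity) (Luc_M_nonneg n hn),
      Dvd.dvd.mul_left (Luc_M_dvd n (by omega)) _⟩
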